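/- Let P_{m,n} = {1,…,n} × {1,…,m} ⊆ ℤ² with m, n ≥ 3. Any set of half-planes identifying P_{m,n} has size at least m + n − 2, and m + n − 2 half-planes suffice; hence the minimum number of identifying half-planes is exactly m + n − 2. -/

import Mathlib

noncomputable section

/-- The Euclidean plane. -/
abbrev Pt : Type := EuclideanSpace ℝ (Fin 2)

instance : DecidableEq Pt := Classical.decEq _

/-- A disk: a closed Euclidean ball with nonnegative radius. -/
def IsDisk (D : Set Pt) : Prop :=
  ∃ (c : Pt) (r : ℝ), 0 ≤ r ∧ D = Metric.closedBall c r

/-- A family of disks identifies a finite point set: every point is covered and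
every pair of distinct points is separated by some disk. -/
def Identifies (𝒟 : Finset (Set Pt)) (P : Finset Pt) : Prop :=
  (∀ p ∈ P, ∃ D ∈ 𝒟, p ∈ D) ∧
  (∀ p ∈ P, ∀ q ∈ P, p ≠ q → ∃ D ∈ 𝒟, (p ∈ D ∧ q ∉ D) ∨ (q ∈ D ∧ p ∉ D))

/-- Minimum number of disks needed to identify `P`. -/
def gammaID (P : Finset Pt) : ℕ :=
  sInf {k | ∃ 𝒟 : Finset (Set Pt), 𝒟.card = k ∧ (∀ D ∈ 𝒟, IsDisk D) ∧ Identifies 𝒟 P}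

/-- A closed half-plane. -/
def IsHalfPlane (H : Set Pt) : Prop :=
  ∃ (u : Pt) (c : ℝ), ‖u‖ = 1 ∧ H = {p : Pt | (inner ℝ p u : ℝ) ≤ c}

/-- The grid `{1,…,n} × {1,…,m}` embedded in the plane. -/
def gridPts (m n : ℕ) : Finset Pt :=
  (Finset.Icc 1 n ×ˢ Finset.Icc 1 m).image (fun q => (WithLp.toLp 2 ![(q.1 : ℝ), (q.2 : ℝ)] : Pt))

def gp (x y : ℝ) : Pt := WithLp.toLp 2 ![x, y]

lemma gp_eq_iff {x y x' y' : ℝ} : gp x y = gp x' y' ↔ x = x' ∧ y = y' := by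
  constructor
  · intro h
    exact ⟨by simpa [gp] using congrArg (fun p : Pt => p 0) h,
      by simpa [gp] using congrArg (fun p : Pt => p 1) h⟩
  · rintro ⟨rfl, rfl⟩; rfl

lemma gp_mem_grid {m n a b : ℕ} (ha1 : 1 ≤ a) (ha2 : a ≤ n) (hb1 : 1 ≤ b) (hb2 : b ≤ m) :
    gp a b ∈ gridPts m n := by
  refine Finset.mem_image.2 ⟨(a, b), ?_, rfl⟩
  simp [Finset.mem_Icc, ha1, ha2, hb1, hb2]

lemma mem_grid_iff {m n : ℕ} {p : Pt} :
    p ∈ gridPts m n ↔ ∃ a b : ℕ, 1 ≤ a ∧ a ≤ n ∧ 1 ≤ b ∧ b ≤ m ∧ p = gp a b := by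
  constructor
  · intro h
    obtain ⟨⟨a, b⟩, hab, rfl⟩ := Finset.mem_image.1 h
    simp only [Finset.mem_product, Finset.mem_Icc] at hab
    exact ⟨a, b, hab.1.1, hab.1.2, hab.2.1, hab.2.2, rfl⟩
  · rintro ⟨a, b, h1, h2, h3, h4, rfl⟩
    exact gp_mem_grid h1 h2 h3 h4

lemma mem_hp_iff (u : Pt) (c x y : ℝ) :
    gp x y ∈ {p : Pt | (inner ℝ p u : ℝ) ≤ c} ↔ u 0 * x + u 1 * y - c ≤ 0 := by
  simp only [Set.mem_setOf_eq, gp, PiLp.inner_apply, RCLike.inner_apply, conj_trivial,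
    Fin.sum_univ_two, PiLp.toLp_apply, Matrix.cons_val_zero, Matrix.cons_val_one, Matrix.head_cons]
  constructor <;> intro <;> linarith

/-- 1-D separation of consecutive integer points by a linear function. -/
def LSep (g : ℝ → ℝ) (i : ℕ) : Prop :=
  (g i ≤ 0 ∧ 0 < g (i + 1)) ∨ (g (i + 1) ≤ 0 ∧ 0 < g i)

lemma sep_pos {α β : ℝ} (hα : 0 ≤ α) {i : ℕ} (h : LSep (fun t => α * t + β) i) :
    α * i + β ≤ 0 ∧ 0 < α * (i + 1) + β := by
  rcases h with ⟨h1, h2⟩ | ⟨h1, h2⟩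
  · push_cast at h1 h2; exact ⟨h1, by push_cast; linarith⟩
  · exfalso; push_cast at h1 h2; nlinarith

lemma sep_neg {α β : ℝ} (hα : α ≤ 0) {i : ℕ} (h : LSep (fun t => α * t + β) i) :
    α * (i + 1) + β ≤ 0 ∧ 0 < α * i + β := by
  rcases h with ⟨h1, h2⟩ | ⟨h1, h2⟩
  · exfalso; push_cast at h1 h2; nlinarith
  · push_cast at h1 h2; exact ⟨by push_cast; linarith, h2⟩

lemma sep_unique {α β : ℝ} {i j : ℕ} (hi : LSep (fun t => α * t + β) i)
    (hj : LSep (fun t => α * t + β) j) : i = j := by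
  rcases lt_trichotomy i j with h | h | h
  · exfalso
    rcases le_total 0 α with hα | hα
    · obtain ⟨-, h2⟩ := sep_pos hα hi
      obtain ⟨h3, -⟩ := sep_pos hα hj
      have hij : (i : ℝ) + 1 ≤ j := by exact_mod_cast h
      nlinarith [mul_le_mul_of_nonneg_left hij hα]
    · obtain ⟨h2, -⟩ := sep_neg hα hi
      obtain ⟨-, h3⟩ := sep_neg hα hj
      have hij : (i : ℝ) + 1 ≤ j := by exact_mod_cast h
      nlinarith [mul_le_mul_of_nonpos_left hij hα]
  · exact h
  · exfalso
    rcases le_total 0 α with hα | hα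
    · obtain ⟨-, h2⟩ := sep_pos hα hj
      obtain ⟨h3, -⟩ := sep_pos hα hi
      have hij : (j : ℝ) + 1 ≤ i := by exact_mod_cast h
      nlinarith [mul_le_mul_of_nonneg_left hij hα]
    · obtain ⟨h2, -⟩ := sep_neg hα hj
      obtain ⟨-, h3⟩ := sep_neg hα hi
      have hij : (j : ℝ) + 1 ≤ i := by exact_mod_cast h
      nlinarith [mul_le_mul_of_nonpos_left hij hα]

/-- Index set for the boundary test pairs: sides 0 = bottom, 1 = top, 2 = left, 3 = right. -/
def sideIdx (m n : ℕ) : Finset (ℕ × ℕ) :=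
  (({0, 1} : Finset ℕ) ×ˢ Finset.Icc 1 (n - 1)) ∪ (({2, 3} : Finset ℕ) ×ˢ Finset.Icc 1 (m - 1))

lemma mem_sideIdx {m n : ℕ} {k : ℕ × ℕ} :
    k ∈ sideIdx m n ↔ ((k.1 = 0 ∨ k.1 = 1) ∧ 1 ≤ k.2 ∧ k.2 ≤ n - 1) ∨
      ((k.1 = 2 ∨ k.1 = 3) ∧ 1 ≤ k.2 ∧ k.2 ≤ m - 1) := by
  simp [sideIdx, Finset.mem_union, Finset.mem_product, Finset.mem_Icc, and_assoc]

lemma sideIdx_card {m n : ℕ} : (sideIdx m n).card = 2 * (n - 1) + 2 * (m - 1) := by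
  rw [sideIdx, Finset.card_union_of_disjoint, Finset.card_product, Finset.card_product]
  · simp [Nat.card_Icc, two_mul]
  · rw [Finset.disjoint_left]
    intro k hk hk'
    simp only [Finset.mem_product, Finset.mem_insert, Finset.mem_singleton] at hk hk'
    omega

/-- The test pair associated to an index. -/
def pairOf (m n : ℕ) (k : ℕ × ℕ) : Pt × Pt :=
  if k.1 = 0 then (gp k.2 1, gp (k.2 + 1) 1)
  else if k.1 = 1 then (gp k.2 m, gp (k.2 + 1) m)
  else if k.1 = 2 then (gp 1 k.2, gp 1 (k.2 + 1))
  else (gp n k.2, gp n (k.2 + 1))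

lemma gp_ne_horiz {x x' y : ℝ} (h : x ≠ x') : gp x y ≠ gp x' y := by
  intro h'; exact h (gp_eq_iff.1 h').1

lemma gp_ne_vert {x y y' : ℝ} (h : y ≠ y') : gp x y ≠ gp x y' := by
  intro h'; exact h (gp_eq_iff.1 h').2

lemma pairOf_mem {m n : ℕ} (hm : 3 ≤ m) (hn : 3 ≤ n) {k : ℕ × ℕ} (hk : k ∈ sideIdx m n) :
    (pairOf m n k).1 ∈ gridPts m n ∧ (pairOf m n k).2 ∈ gridPts m n ∧
      (pairOf m n k).1 ≠ (pairOf m n k).2 := by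
  rw [mem_sideIdx] at hk
  obtain ⟨s, i⟩ := k
  have hne : ((i : ℝ)) ≠ ((i : ℝ) + 1) := by intro h; linarith
  rcases hk with ⟨hs, h1, h2⟩ | ⟨hs, h1, h2⟩ <;> rcases hs with rfl | rfl <;>
      simp only [pairOf, if_true, if_false, reduceIte]
  · refine ⟨?_, ?_, ?_⟩
    · exact_mod_cast gp_mem_grid (a := i) (b := 1) h1 (by omega) (by omega) (by omega)
    · have := gp_mem_grid (m := m) (n := n) (a := i + 1) (b := 1) (by omega) (by omega) (by omega) (by omega)
      push_cast at this ⊢; exact this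
    · exact gp_ne_horiz hne
  · refine ⟨?_, ?_, ?_⟩
    · exact_mod_cast gp_mem_grid (a := i) (b := m) h1 (by omega) (by omega) (by omega)
    · have := gp_mem_grid (m := m) (n := n) (a := i + 1) (b := m) (by omega) (by omega) (by omega) (by omega)
      push_cast at this ⊢; exact this
    · exact gp_ne_horiz (y := (m:ℝ)) hne
  · refine ⟨?_, ?_, ?_⟩
    · exact_mod_cast gp_mem_grid (a := 1) (b := i) (by omega) (by omega) h1 (by omega)
    · have := gp_mem_grid (m := m) (n := n) (a := 1) (b := i + 1) (by omega) (by omega) (by omega) (by omega)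
      push_cast at this ⊢; exact this
    · exact gp_ne_vert hne
  · refine ⟨?_, ?_, ?_⟩
    · exact_mod_cast gp_mem_grid (a := n) (b := i) (by omega) (by omega) h1 (by omega)
    · have := gp_mem_grid (m := m) (n := n) (a := n) (b := i + 1) (by omega) (by omega) (by omega) (by omega)
      push_cast at this ⊢; exact this
    · exact gp_ne_vert hne

/-- The linear function describing a half-plane with normal `(a,b)` and offset `c`
along side `s` of the grid. -/
def sfun (m n : ℕ) (a b c : ℝ) (s : ℕ) : ℝ → ℝ :=
  if s = 0 then fun t => a * t + (b * 1 - c)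
  else if s = 1 then fun t => a * t + (b * m - c)
  else if s = 2 then fun t => b * t + (a * 1 - c)
  else fun t => b * t + (a * n - c)

section conflicts
variable {m n i j : ℕ} {a b c : ℝ}

lemma cast_add_one_le {i n : ℕ} (h : i + 1 ≤ n) : ((i : ℝ) + 1) ≤ n := by exact_mod_cast h
lemma cast_one_le {j : ℕ} (h : 1 ≤ j) : (1 : ℝ) ≤ j := by exact_mod_cast h

lemma conflict_pp_br (hm : 3 ≤ m) (hn : 3 ≤ n) (ha : 0 ≤ a) (hb : 0 ≤ b)
    (h1 : LSep (fun t => a * t + (b * 1 - c)) i)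
    (h2 : LSep (fun t => b * t + (a * n - c)) j) (hi : i + 1 ≤ n) (hj : 1 ≤ j) : False := by
  obtain ⟨-, H1⟩ := sep_pos ha h1
  obtain ⟨H2, -⟩ := sep_pos hb h2
  linarith [mul_le_mul_of_nonneg_left (cast_add_one_le hi) ha,
    mul_le_mul_of_nonneg_left (cast_one_le hj) hb]

lemma conflict_pp_tl (hm : 3 ≤ m) (hn : 3 ≤ n) (ha : 0 ≤ a) (hb : 0 ≤ b)
    (h1 : LSep (fun t => a * t + (b * m - c)) i)
    (h2 : LSep (fun t => b * t + (a * 1 - c)) j) (hi : 1 ≤ i) (hj : j + 1 ≤ m) : False := by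
  obtain ⟨H1, -⟩ := sep_pos ha h1
  obtain ⟨-, H2⟩ := sep_pos hb h2
  linarith [mul_le_mul_of_nonneg_left (cast_one_le hi) ha,
    mul_le_mul_of_nonneg_left (cast_add_one_le hj) hb]

lemma conflict_pn_tr (hm : 3 ≤ m) (hn : 3 ≤ n) (ha : 0 ≤ a) (hb : b ≤ 0)
    (h1 : LSep (fun t => a * t + (b * m - c)) i)
    (h2 : LSep (fun t => b * t + (a * n - c)) j) (hi : i + 1 ≤ n) (hj : j + 1 ≤ m) : False := by
  obtain ⟨-, H1⟩ := sep_pos ha h1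
  obtain ⟨H2, -⟩ := sep_neg hb h2
  linarith [mul_le_mul_of_nonneg_left (cast_add_one_le hi) ha,
    mul_le_mul_of_nonpos_left (cast_add_one_le hj) hb]

lemma conflict_pn_bl (hm : 3 ≤ m) (hn : 3 ≤ n) (ha : 0 ≤ a) (hb : b ≤ 0)
    (h1 : LSep (fun t => a * t + (b * 1 - c)) i)
    (h2 : LSep (fun t => b * t + (a * 1 - c)) j) (hi : 1 ≤ i) (hj : 1 ≤ j) : False := by
  obtain ⟨H1, -⟩ := sep_pos ha h1
  obtain ⟨-, H2⟩ := sep_neg hb h2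
  linarith [mul_le_mul_of_nonneg_left (cast_one_le hi) ha,
    mul_le_mul_of_nonpos_left (cast_one_le hj) hb]

lemma conflict_np_tr (hm : 3 ≤ m) (hn : 3 ≤ n) (ha : a ≤ 0) (hb : 0 ≤ b)
    (h1 : LSep (fun t => a * t + (b * m - c)) i)
    (h2 : LSep (fun t => b * t + (a * n - c)) j) (hi : i + 1 ≤ n) (hj : j + 1 ≤ m) : False := by
  obtain ⟨H1, -⟩ := sep_neg ha h1
  obtain ⟨-, H2⟩ := sep_pos hb h2
  linarith [mul_le_mul_of_nonpos_left (cast_add_one_le hi) ha,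
    mul_le_mul_of_nonneg_left (cast_add_one_le hj) hb]

lemma conflict_np_bl (hm : 3 ≤ m) (hn : 3 ≤ n) (ha : a ≤ 0) (hb : 0 ≤ b)
    (h1 : LSep (fun t => a * t + (b * 1 - c)) i)
    (h2 : LSep (fun t => b * t + (a * 1 - c)) j) (hi : 1 ≤ i) (hj : 1 ≤ j) : False := by
  obtain ⟨-, H1⟩ := sep_neg ha h1
  obtain ⟨H2, -⟩ := sep_pos hb h2
  linarith [mul_le_mul_of_nonpos_left (cast_one_le hi) ha,
    mul_le_mul_of_nonneg_left (cast_one_le hj) hb]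

lemma conflict_nn_br (hm : 3 ≤ m) (hn : 3 ≤ n) (ha : a ≤ 0) (hb : b ≤ 0)
    (h1 : LSep (fun t => a * t + (b * 1 - c)) i)
    (h2 : LSep (fun t => b * t + (a * n - c)) j) (hi : i + 1 ≤ n) (hj : 1 ≤ j) : False := by
  obtain ⟨H1, -⟩ := sep_neg ha h1
  obtain ⟨-, H2⟩ := sep_neg hb h2
  linarith [mul_le_mul_of_nonpos_left (cast_add_one_le hi) ha,
    mul_le_mul_of_nonpos_left (cast_one_le hj) hb]

lemma conflict_nn_tl (hm : 3 ≤ m) (hn : 3 ≤ n) (ha : a ≤ 0) (hb : b ≤ 0)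
    (h1 : LSep (fun t => a * t + (b * m - c)) i)
    (h2 : LSep (fun t => b * t + (a * 1 - c)) j) (hi : 1 ≤ i) (hj : j + 1 ≤ m) : False := by
  obtain ⟨-, H1⟩ := sep_neg ha h1
  obtain ⟨H2, -⟩ := sep_neg hb h2
  linarith [mul_le_mul_of_nonpos_left (cast_one_le hi) ha,
    mul_le_mul_of_nonpos_left (cast_add_one_le hj) hb]

end conflicts

lemma bool_pigeon {b1 b2 b3 : Bool} (h12 : b1 ≠ b2) (h13 : b1 ≠ b3) (h23 : b2 ≠ b3) :
    False := by cases b1 <;> cases b2 <;> cases b3 <;> simp_all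

/-- Membership bounds, in destructured form. -/
def SB (m n s i : ℕ) : Prop :=
  ((s = 0 ∨ s = 1) ∧ 1 ≤ i ∧ i ≤ n - 1) ∨ ((s = 2 ∨ s = 3) ∧ 1 ≤ i ∧ i ≤ m - 1)

lemma no_three {m n : ℕ} (hm : 3 ≤ m) (hn : 3 ≤ n) (a b c : ℝ)
    {k₁ k₂ k₃ : ℕ × ℕ} (h₁ : k₁ ∈ sideIdx m n) (h₂ : k₂ ∈ sideIdx m n) (h₃ : k₃ ∈ sideIdx m n)
    (s₁ : LSep (sfun m n a b c k₁.1) k₁.2) (s₂ : LSep (sfun m n a b c k₂.1) k₂.2)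
    (s₃ : LSep (sfun m n a b c k₃.1) k₃.2)
    (n12 : k₁ ≠ k₂) (n13 : k₁ ≠ k₃) (n23 : k₂ ≠ k₃) : False := by
  have hb₁ : SB m n k₁.1 k₁.2 := mem_sideIdx.1 h₁
  have hb₂ : SB m n k₂.1 k₂.2 := mem_sideIdx.1 h₂
  have hb₃ : SB m n k₃.1 k₃.2 := mem_sideIdx.1 h₃
  have hne12 : ¬(k₁.1 = k₂.1 ∧ k₁.2 = k₂.2) := fun h => n12 (Prod.ext h.1 h.2)
  have hne13 : ¬(k₁.1 = k₃.1 ∧ k₁.2 = k₃.2) := fun h => n13 (Prod.ext h.1 h.2)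
  have hne23 : ¬(k₂.1 = k₃.1 ∧ k₂.2 = k₃.2) := fun h => n23 (Prod.ext h.1 h.2)
  have hsame : ∀ (si i j : ℕ), LSep (sfun m n a b c si) i → LSep (sfun m n a b c si) j →
      (si = 0 ∨ si = 1 ∨ si = 2 ∨ si = 3) → i ≠ j → False := by
    rintro si i j hA hB (rfl | rfl | rfl | rfl) hne <;>
      simp only [sfun, reduceIte] at hA hB <;> exact hne (sep_unique hA hB)
  clear h₁ h₂ h₃ n12 n13 n23
  obtain ⟨s1, i1⟩ := k₁
  obtain ⟨s2, i2⟩ := k₂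
  obtain ⟨s3, i3⟩ := k₃
  simp only [SB] at hb₁ hb₂ hb₃
  simp only at s₁ s₂ s₃ hne12 hne13 hne23
  rcases le_total 0 a with ha | ha <;> rcases le_total 0 b with hb | hb
  · -- 0 ≤ a, 0 ≤ b : groups {0,3} and {1,2}
    have key : ∀ s i s' j, SB m n s i → SB m n s' j →
        LSep (sfun m n a b c s) i → LSep (sfun m n a b c s') j → ¬(s = s' ∧ i = j) →
        decide (s = 0 ∨ s = 3) ≠ decide (s' = 0 ∨ s' = 3) := by
      intro s i s' j hk hk' hsep hsep' hne heq
      simp only [SB] at hk hk'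
      have hs : s = 0 ∨ s = 1 ∨ s = 2 ∨ s = 3 := by omega
      have hs' : s' = 0 ∨ s' = 1 ∨ s' = 2 ∨ s' = 3 := by omega
      rcases hs with rfl | rfl | rfl | rfl <;> rcases hs' with rfl | rfl | rfl | rfl <;>
        first
          | exact absurd heq (by decide)
          | exact hsame _ _ _ hsep hsep' (by omega) (by omega)
          | exact conflict_pp_br hm hn ha hb
              (by simpa [sfun] using hsep) (by simpa [sfun] using hsep') (by omega) (by omega)
          | exact conflict_pp_br hm hn ha hb
              (by simpa [sfun] using hsep') (by simpa [sfun] using hsep) (by omega) (by omega)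
          | exact conflict_pp_tl hm hn ha hb
              (by simpa [sfun] using hsep) (by simpa [sfun] using hsep') (by omega) (by omega)
          | exact conflict_pp_tl hm hn ha hb
              (by simpa [sfun] using hsep') (by simpa [sfun] using hsep) (by omega) (by omega)
    exact bool_pigeon (key s1 i1 s2 i2 hb₁ hb₂ s₁ s₂ hne12)
      (key s1 i1 s3 i3 hb₁ hb₃ s₁ s₃ hne13) (key s2 i2 s3 i3 hb₂ hb₃ s₂ s₃ hne23)
  · -- 0 ≤ a, b ≤ 0 : groups {0,2} and {1,3}
    have key : ∀ s i s' j, SB m n s i → SB m n s' j →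
        LSep (sfun m n a b c s) i → LSep (sfun m n a b c s') j → ¬(s = s' ∧ i = j) →
        decide (s = 0 ∨ s = 2) ≠ decide (s' = 0 ∨ s' = 2) := by
      intro s i s' j hk hk' hsep hsep' hne heq
      simp only [SB] at hk hk'
      have hs : s = 0 ∨ s = 1 ∨ s = 2 ∨ s = 3 := by omega
      have hs' : s' = 0 ∨ s' = 1 ∨ s' = 2 ∨ s' = 3 := by omega
      rcases hs with rfl | rfl | rfl | rfl <;> rcases hs' with rfl | rfl | rfl | rfl <;>
        first
          | exact absurd heq (by decide)
          | exact hsame _ _ _ hsep hsep' (by omega) (by omega)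
          | exact conflict_pn_tr hm hn ha hb
              (by simpa [sfun] using hsep) (by simpa [sfun] using hsep') (by omega) (by omega)
          | exact conflict_pn_tr hm hn ha hb
              (by simpa [sfun] using hsep') (by simpa [sfun] using hsep) (by omega) (by omega)
          | exact conflict_pn_bl hm hn ha hb
              (by simpa [sfun] using hsep) (by simpa [sfun] using hsep') (by omega) (by omega)
          | exact conflict_pn_bl hm hn ha hb
              (by simpa [sfun] using hsep') (by simpa [sfun] using hsep) (by omega) (by omega)
    exact bool_pigeon (key s1 i1 s2 i2 hb₁ hb₂ s₁ s₂ hne12)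
      (key s1 i1 s3 i3 hb₁ hb₃ s₁ s₃ hne13) (key s2 i2 s3 i3 hb₂ hb₃ s₂ s₃ hne23)
  · -- a ≤ 0, 0 ≤ b : groups {0,2} and {1,3}
    have key : ∀ s i s' j, SB m n s i → SB m n s' j →
        LSep (sfun m n a b c s) i → LSep (sfun m n a b c s') j → ¬(s = s' ∧ i = j) →
        decide (s = 0 ∨ s = 2) ≠ decide (s' = 0 ∨ s' = 2) := by
      intro s i s' j hk hk' hsep hsep' hne heq
      simp only [SB] at hk hk'
      have hs : s = 0 ∨ s = 1 ∨ s = 2 ∨ s = 3 := by omega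
      have hs' : s' = 0 ∨ s' = 1 ∨ s' = 2 ∨ s' = 3 := by omega
      rcases hs with rfl | rfl | rfl | rfl <;> rcases hs' with rfl | rfl | rfl | rfl <;>
        first
          | exact absurd heq (by decide)
          | exact hsame _ _ _ hsep hsep' (by omega) (by omega)
          | exact conflict_np_tr hm hn ha hb
              (by simpa [sfun] using hsep) (by simpa [sfun] using hsep') (by omega) (by omega)
          | exact conflict_np_tr hm hn ha hb
              (by simpa [sfun] using hsep') (by simpa [sfun] using hsep) (by omega) (by omega)
          | exact conflict_np_bl hm hn ha hb
              (by simpa [sfun] using hsep) (by simpa [sfun] using hsep') (by omega) (by omega)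
          | exact conflict_np_bl hm hn ha hb
              (by simpa [sfun] using hsep') (by simpa [sfun] using hsep) (by omega) (by omega)
    exact bool_pigeon (key s1 i1 s2 i2 hb₁ hb₂ s₁ s₂ hne12)
      (key s1 i1 s3 i3 hb₁ hb₃ s₁ s₃ hne13) (key s2 i2 s3 i3 hb₂ hb₃ s₂ s₃ hne23)
  · -- a ≤ 0, b ≤ 0 : groups {0,3} and {1,2}
    have key : ∀ s i s' j, SB m n s i → SB m n s' j →
        LSep (sfun m n a b c s) i → LSep (sfun m n a b c s') j → ¬(s = s' ∧ i = j) →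
        decide (s = 0 ∨ s = 3) ≠ decide (s' = 0 ∨ s' = 3) := by
      intro s i s' j hk hk' hsep hsep' hne heq
      simp only [SB] at hk hk'
      have hs : s = 0 ∨ s = 1 ∨ s = 2 ∨ s = 3 := by omega
      have hs' : s' = 0 ∨ s' = 1 ∨ s' = 2 ∨ s' = 3 := by omega
      rcases hs with rfl | rfl | rfl | rfl <;> rcases hs' with rfl | rfl | rfl | rfl <;>
        first
          | exact absurd heq (by decide)
          | exact hsame _ _ _ hsep hsep' (by omega) (by omega)
          | exact conflict_nn_br hm hn ha hb
              (by simpa [sfun] using hsep) (by simpa [sfun] using hsep') (by omega) (by omega)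
          | exact conflict_nn_br hm hn ha hb
              (by simpa [sfun] using hsep') (by simpa [sfun] using hsep) (by omega) (by omega)
          | exact conflict_nn_tl hm hn ha hb
              (by simpa [sfun] using hsep) (by simpa [sfun] using hsep') (by omega) (by omega)
          | exact conflict_nn_tl hm hn ha hb
              (by simpa [sfun] using hsep') (by simpa [sfun] using hsep) (by omega) (by omega)
    exact bool_pigeon (key s1 i1 s2 i2 hb₁ hb₂ s₁ s₂ hne12)
      (key s1 i1 s3 i3 hb₁ hb₃ s₁ s₃ hne13) (key s2 i2 s3 i3 hb₂ hb₃ s₂ s₃ hne23)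

lemma sep_real {u : Pt} {c x y x' y' : ℝ}
    (h : (gp x y ∈ {p : Pt | (inner ℝ p u : ℝ) ≤ c} ∧ gp x' y' ∉ {p : Pt | (inner ℝ p u : ℝ) ≤ c}) ∨
      (gp x' y' ∈ {p : Pt | (inner ℝ p u : ℝ) ≤ c} ∧ gp x y ∉ {p : Pt | (inner ℝ p u : ℝ) ≤ c})) :
    (u 0 * x + u 1 * y - c ≤ 0 ∧ 0 < u 0 * x' + u 1 * y' - c) ∨
      (u 0 * x' + u 1 * y' - c ≤ 0 ∧ 0 < u 0 * x + u 1 * y - c) := by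
  simp only [mem_hp_iff] at h
  rcases h with ⟨h1, h2⟩ | ⟨h1, h2⟩
  · exact Or.inl ⟨h1, not_le.1 h2⟩
  · exact Or.inr ⟨h1, not_le.1 h2⟩

lemma lower_bound (m n : ℕ) (hm : 3 ≤ m) (hn : 3 ≤ n) (𝒟 : Finset (Set Pt))
    (hHP : ∀ H ∈ 𝒟, IsHalfPlane H) (hId : Identifies 𝒟 (gridPts m n)) :
    m + n - 2 ≤ 𝒟.card := by
  classical
  set g : ℕ × ℕ → Set Pt := fun k =>
    if h : ∃ D ∈ 𝒟, ((pairOf m n k).1 ∈ D ∧ (pairOf m n k).2 ∉ D) ∨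
        ((pairOf m n k).2 ∈ D ∧ (pairOf m n k).1 ∉ D)
    then h.choose else ∅ with hg
  have hgood : ∀ k ∈ sideIdx m n, g k ∈ 𝒟 ∧
      (((pairOf m n k).1 ∈ g k ∧ (pairOf m n k).2 ∉ g k) ∨
        ((pairOf m n k).2 ∈ g k ∧ (pairOf m n k).1 ∉ g k)) := by
    intro k hk
    obtain ⟨hp1, hp2, hpne⟩ := pairOf_mem hm hn hk
    have hex := hId.2 _ hp1 _ hp2 hpne
    rw [hg]
    dsimp only
    rw [dif_pos hex]
    exact ⟨hex.choose_spec.1, hex.choose_spec.2⟩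
  have hfib : ∀ H ∈ 𝒟, ((sideIdx m n).filter (fun k => g k = H)).card ≤ 2 := by
    intro H hH
    by_contra hcon
    push_neg at hcon
    obtain ⟨k₁, hk₁, k₂, hk₂, k₃, hk₃, n12, n13, n23⟩ := Finset.two_lt_card.1 hcon
    simp only [Finset.mem_filter] at hk₁ hk₂ hk₃
    obtain ⟨u, c, hu, rfl⟩ := hHP H hH
    have bridge : ∀ k ∈ sideIdx m n, g k = {p : Pt | (inner ℝ p u : ℝ) ≤ c} →
        LSep (sfun m n (u 0) (u 1) c k.1) k.2 := by
      intro k hk hEq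
      have hsep := (hgood k hk).2
      rw [hEq] at hsep
      have hb : SB m n k.1 k.2 := mem_sideIdx.1 hk
      obtain ⟨s, i⟩ := k
      simp only [SB] at hb
      have hs : s = 0 ∨ s = 1 ∨ s = 2 ∨ s = 3 := by omega
      rcases hs with rfl | rfl | rfl | rfl
      · have h' := sep_real (u := u) (c := c) (x := (i:ℝ)) (y := 1)
          (x' := (i:ℝ) + 1) (y' := 1) hsep
        rcases h' with ⟨h1, h2⟩ | ⟨h1, h2⟩
        · exact Or.inl ⟨by show u 0 * (i:ℝ) + (u 1 * 1 - c) ≤ 0; linarith,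
            by show (0:ℝ) < u 0 * ((i:ℝ) + 1) + (u 1 * 1 - c); linarith⟩
        · exact Or.inr ⟨by show u 0 * ((i:ℝ) + 1) + (u 1 * 1 - c) ≤ 0; linarith,
            by show (0:ℝ) < u 0 * (i:ℝ) + (u 1 * 1 - c); linarith⟩
      · have h' := sep_real (u := u) (c := c) (x := (i:ℝ)) (y := (m:ℝ))
          (x' := (i:ℝ) + 1) (y' := (m:ℝ)) hsep
        rcases h' with ⟨h1, h2⟩ | ⟨h1, h2⟩
        · exact Or.inl ⟨by show u 0 * (i:ℝ) + (u 1 * m - c) ≤ 0; linarith,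
            by show (0:ℝ) < u 0 * ((i:ℝ) + 1) + (u 1 * m - c); linarith⟩
        · exact Or.inr ⟨by show u 0 * ((i:ℝ) + 1) + (u 1 * m - c) ≤ 0; linarith,
            by show (0:ℝ) < u 0 * (i:ℝ) + (u 1 * m - c); linarith⟩
      · have h' := sep_real (u := u) (c := c) (x := (1:ℝ)) (y := (i:ℝ))
          (x' := (1:ℝ)) (y' := (i:ℝ) + 1) hsep
        rcases h' with ⟨h1, h2⟩ | ⟨h1, h2⟩
        · exact Or.inl ⟨by show u 1 * (i:ℝ) + (u 0 * 1 - c) ≤ 0; linarith,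
            by show (0:ℝ) < u 1 * ((i:ℝ) + 1) + (u 0 * 1 - c); linarith⟩
        · exact Or.inr ⟨by show u 1 * ((i:ℝ) + 1) + (u 0 * 1 - c) ≤ 0; linarith,
            by show (0:ℝ) < u 1 * (i:ℝ) + (u 0 * 1 - c); linarith⟩
      · have h' := sep_real (u := u) (c := c) (x := (n:ℝ)) (y := (i:ℝ))
          (x' := (n:ℝ)) (y' := (i:ℝ) + 1) hsep
        rcases h' with ⟨h1, h2⟩ | ⟨h1, h2⟩
        · exact Or.inl ⟨by show u 1 * (i:ℝ) + (u 0 * n - c) ≤ 0; linarith,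
            by show (0:ℝ) < u 1 * ((i:ℝ) + 1) + (u 0 * n - c); linarith⟩
        · exact Or.inr ⟨by show u 1 * ((i:ℝ) + 1) + (u 0 * n - c) ≤ 0; linarith,
            by show (0:ℝ) < u 1 * (i:ℝ) + (u 0 * n - c); linarith⟩
    exact no_three hm hn (u 0) (u 1) c hk₁.1 hk₂.1 hk₃.1
      (bridge _ hk₁.1 hk₁.2) (bridge _ hk₂.1 hk₂.2) (bridge _ hk₃.1 hk₃.2) n12 n13 n23
  have hcount := Finset.card_eq_sum_card_fiberwise (fun k hk => (hgood k hk).1)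
  have hle : (sideIdx m n).card ≤ 𝒟.card * 2 := by
    rw [hcount]
    calc ∑ H ∈ 𝒟, ((sideIdx m n).filter (fun k => g k = H)).card
        ≤ 𝒟.card • 2 := Finset.sum_le_card_nsmul 𝒟 _ 2 hfib
      _ = 𝒟.card * 2 := by simp [smul_eq_mul]
  rw [sideIdx_card] at hle
  omega

noncomputable instance : DecidableEq (Set Pt) := Classical.decEq _

/-- The half-planes used for the upper-bound construction. -/
def upF : ℕ ⊕ ℕ → Set Pt
  | .inl i => if i = 1 then {p : Pt | 3/2 ≤ p 0} else {p : Pt | p 0 ≤ i + 1/2}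
  | .inr j => if j = 1 then {p : Pt | 3/2 ≤ p 1} else {p : Pt | p 1 ≤ j + 1/2}

def upD (m n : ℕ) : Finset (Set Pt) :=
  ((Finset.Icc 1 (n - 1)).disjSum (Finset.Icc 1 (m - 1))).image upF

lemma set_ne {A B : Set Pt} (p : Pt) (hA : p ∈ A) (hB : p ∉ B) : A ≠ B :=
  fun h => hB (h ▸ hA)

lemma upF_inl_one : upF (Sum.inl 1) = {p : Pt | 3/2 ≤ p 0} := rfl
lemma upF_inr_one : upF (Sum.inr 1) = {p : Pt | 3/2 ≤ p 1} := rfl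
lemma upF_inl {i : ℕ} (h : i ≠ 1) : upF (Sum.inl i) = {p : Pt | p 0 ≤ i + 1/2} := by
  show (if i = 1 then {p : Pt | 3/2 ≤ p 0} else {p : Pt | p 0 ≤ i + 1/2}) = _
  rw [if_neg h]
lemma upF_inr {j : ℕ} (h : j ≠ 1) : upF (Sum.inr j) = {p : Pt | p 1 ≤ j + 1/2} := by
  show (if j = 1 then {p : Pt | 3/2 ≤ p 1} else {p : Pt | p 1 ≤ j + 1/2}) = _
  rw [if_neg h]

lemma isHP_ge0 : IsHalfPlane {p : Pt | 3/2 ≤ p 0} := by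
  refine ⟨gp (-1) 0, -(3/2), ?_, ?_⟩
  · simp [gp, EuclideanSpace.norm_eq, Fin.sum_univ_two]
  · ext p
    simp only [Set.mem_setOf_eq, PiLp.inner_apply, RCLike.inner_apply, conj_trivial,
      Fin.sum_univ_two, gp, PiLp.toLp_apply, Matrix.cons_val_zero, Matrix.cons_val_one, Matrix.head_cons]
    constructor <;> intro <;> linarith

lemma isHP_ge1 : IsHalfPlane {p : Pt | 3/2 ≤ p 1} := by
  refine ⟨gp 0 (-1), -(3/2), ?_, ?_⟩
  · simp [gp, EuclideanSpace.norm_eq, Fin.sum_univ_two]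
  · ext p
    simp only [Set.mem_setOf_eq, PiLp.inner_apply, RCLike.inner_apply, conj_trivial,
      Fin.sum_univ_two, gp, PiLp.toLp_apply, Matrix.cons_val_zero, Matrix.cons_val_one, Matrix.head_cons]
    constructor <;> intro <;> linarith

lemma isHP_le0 (t : ℝ) : IsHalfPlane {p : Pt | p 0 ≤ t} := by
  refine ⟨gp 1 0, t, ?_, ?_⟩
  · simp [gp, EuclideanSpace.norm_eq, Fin.sum_univ_two]
  · ext p
    simp only [Set.mem_setOf_eq, PiLp.inner_apply, RCLike.inner_apply, conj_trivial,
      Fin.sum_univ_two, gp, PiLp.toLp_apply, Matrix.cons_val_zero, Matrix.cons_val_one, Matrix.head_cons]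
    constructor <;> intro <;> linarith

lemma isHP_le1 (t : ℝ) : IsHalfPlane {p : Pt | p 1 ≤ t} := by
  refine ⟨gp 0 1, t, ?_, ?_⟩
  · simp [gp, EuclideanSpace.norm_eq, Fin.sum_univ_two]
  · ext p
    simp only [Set.mem_setOf_eq, PiLp.inner_apply, RCLike.inner_apply, conj_trivial,
      Fin.sum_univ_two, gp, PiLp.toLp_apply, Matrix.cons_val_zero, Matrix.cons_val_one, Matrix.head_cons]
    constructor <;> intro <;> linarith

lemma upD_isHP {m n : ℕ} : ∀ H ∈ upD m n, IsHalfPlane H := by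
  intro H hH
  obtain ⟨z, hz, rfl⟩ := Finset.mem_image.1 hH
  rcases z with i | j
  · by_cases h : i = 1
    · subst h; rw [upF_inl_one]; exact isHP_ge0
    · rw [upF_inl h]; exact isHP_le0 _
  · by_cases h : j = 1
    · subst h; rw [upF_inr_one]; exact isHP_ge1
    · rw [upF_inr h]; exact isHP_le1 _

lemma mem_upD_inl {m n i : ℕ} (h1 : 1 ≤ i) (h2 : i ≤ n - 1) : upF (Sum.inl i) ∈ upD m n :=
  Finset.mem_image.2 ⟨Sum.inl i, by simp [Finset.inl_mem_disjSum, Finset.mem_Icc, h1, h2], rfl⟩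

lemma mem_upD_inr {m n j : ℕ} (h1 : 1 ≤ j) (h2 : j ≤ m - 1) : upF (Sum.inr j) ∈ upD m n :=
  Finset.mem_image.2 ⟨Sum.inr j, by simp [Finset.inr_mem_disjSum, Finset.mem_Icc, h1, h2], rfl⟩

lemma upD_card {m n : ℕ} (hm : 3 ≤ m) (hn : 3 ≤ n) : (upD m n).card = m + n - 2 := by
  rw [upD, Finset.card_image_of_injOn, Finset.card_disjSum, Nat.card_Icc, Nat.card_Icc]
  · omega
  · intro z hz z' hz' h
    rw [Finset.mem_coe] at hz hz'
    rcases z with i | j <;> rcases z' with i' | j'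
    · rw [Finset.inl_mem_disjSum, Finset.mem_Icc] at hz hz'
      by_cases h1 : i = 1 <;> by_cases h2 : i' = 1
      · rw [h1, h2]
      · exfalso
        rw [h1, upF_inl_one, upF_inl h2] at h
        have hc : (1:ℝ) ≤ (i':ℝ) := by exact_mod_cast hz'.1
        exact set_ne (A := {p : Pt | p 0 ≤ (i':ℝ) + 1/2}) (gp 1 0)
          (by show (1:ℝ) ≤ (i':ℝ) + 1/2; linarith)
          (by show ¬ (3:ℝ)/2 ≤ (1:ℝ); norm_num) h.symm
      · exfalso
        rw [h2, upF_inl_one, upF_inl h1] at h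
        have hc : (1:ℝ) ≤ (i:ℝ) := by exact_mod_cast hz.1
        exact set_ne (A := {p : Pt | p 0 ≤ (i:ℝ) + 1/2}) (gp 1 0)
          (by show (1:ℝ) ≤ (i:ℝ) + 1/2; linarith)
          (by show ¬ (3:ℝ)/2 ≤ (1:ℝ); norm_num) h
      · rw [upF_inl h1, upF_inl h2] at h
        rcases Nat.lt_trichotomy i i' with hlt | heq | hgt
        · exfalso
          have hc : (i:ℝ) + 1 ≤ (i':ℝ) := by exact_mod_cast hlt
          exact set_ne (A := {p : Pt | p 0 ≤ (i':ℝ) + 1/2}) (gp i' 0)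
            (by show (i':ℝ) ≤ (i':ℝ) + 1/2; linarith)
            (by show ¬ (i':ℝ) ≤ (i:ℝ) + 1/2; push_neg; linarith) h.symm
        · rw [heq]
        · exfalso
          have hc : (i':ℝ) + 1 ≤ (i:ℝ) := by exact_mod_cast hgt
          exact set_ne (A := {p : Pt | p 0 ≤ (i:ℝ) + 1/2}) (gp i 0)
            (by show (i:ℝ) ≤ (i:ℝ) + 1/2; linarith)
            (by show ¬ (i:ℝ) ≤ (i':ℝ) + 1/2; push_neg; linarith) h
    · exfalso
      rw [Finset.inl_mem_disjSum, Finset.mem_Icc] at hz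
      rw [Finset.inr_mem_disjSum, Finset.mem_Icc] at hz'
      have hc : (1:ℝ) ≤ (i:ℝ) := by exact_mod_cast hz.1
      have hc' : (1:ℝ) ≤ (j':ℝ) := by exact_mod_cast hz'.1
      by_cases h1 : i = 1 <;> by_cases h2 : j' = 1
      · rw [h1, upF_inl_one, h2, upF_inr_one] at h
        exact set_ne (gp 2 1) (by show (3:ℝ)/2 ≤ 2; norm_num)
          (by show ¬ (3:ℝ)/2 ≤ 1; norm_num) h
      · rw [h1, upF_inl_one, upF_inr h2] at h
        exact set_ne (gp 2 ((j':ℝ) + 1)) (by show (3:ℝ)/2 ≤ 2; norm_num)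
          (by show ¬ (j':ℝ) + 1 ≤ (j':ℝ) + 1/2; push_neg; linarith) h
      · rw [upF_inl h1, h2, upF_inr_one] at h
        exact set_ne (gp 1 1) (by show (1:ℝ) ≤ (i:ℝ) + 1/2; linarith)
          (by show ¬ (3:ℝ)/2 ≤ 1; norm_num) h
      · rw [upF_inl h1, upF_inr h2] at h
        exact set_ne (gp 1 ((j':ℝ) + 1)) (by show (1:ℝ) ≤ (i:ℝ) + 1/2; linarith)
          (by show ¬ (j':ℝ) + 1 ≤ (j':ℝ) + 1/2; push_neg; linarith) h
    · exfalso
      rw [Finset.inr_mem_disjSum, Finset.mem_Icc] at hz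
      rw [Finset.inl_mem_disjSum, Finset.mem_Icc] at hz'
      have hc : (1:ℝ) ≤ (j:ℝ) := by exact_mod_cast hz.1
      have hc' : (1:ℝ) ≤ (i':ℝ) := by exact_mod_cast hz'.1
      by_cases h1 : j = 1 <;> by_cases h2 : i' = 1
      · rw [h1, upF_inr_one, h2, upF_inl_one] at h
        exact set_ne (gp 1 2) (by show (3:ℝ)/2 ≤ 2; norm_num)
          (by show ¬ (3:ℝ)/2 ≤ 1; norm_num) h
      · rw [h1, upF_inr_one, upF_inl h2] at h
        exact set_ne (gp ((i':ℝ) + 1) 2) (by show (3:ℝ)/2 ≤ 2; norm_num)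
          (by show ¬ (i':ℝ) + 1 ≤ (i':ℝ) + 1/2; push_neg; linarith) h
      · rw [upF_inr h1, h2, upF_inl_one] at h
        exact set_ne (gp 1 1) (by show (1:ℝ) ≤ (j:ℝ) + 1/2; linarith)
          (by show ¬ (3:ℝ)/2 ≤ 1; norm_num) h
      · rw [upF_inr h1, upF_inl h2] at h
        exact set_ne (gp ((i':ℝ) + 1) 1) (by show (1:ℝ) ≤ (j:ℝ) + 1/2; linarith)
          (by show ¬ (i':ℝ) + 1 ≤ (i':ℝ) + 1/2; push_neg; linarith) h
    · rw [Finset.inr_mem_disjSum, Finset.mem_Icc] at hz hz'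
      by_cases h1 : j = 1 <;> by_cases h2 : j' = 1
      · rw [h1, h2]
      · exfalso
        rw [h1, upF_inr_one, upF_inr h2] at h
        have hc : (1:ℝ) ≤ (j':ℝ) := by exact_mod_cast hz'.1
        exact set_ne (A := {p : Pt | p 1 ≤ (j':ℝ) + 1/2}) (gp 0 1)
          (by show (1:ℝ) ≤ (j':ℝ) + 1/2; linarith)
          (by show ¬ (3:ℝ)/2 ≤ (1:ℝ); norm_num) h.symm
      · exfalso
        rw [h2, upF_inr_one, upF_inr h1] at h
        have hc : (1:ℝ) ≤ (j:ℝ) := by exact_mod_cast hz.1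
        exact set_ne (A := {p : Pt | p 1 ≤ (j:ℝ) + 1/2}) (gp 0 1)
          (by show (1:ℝ) ≤ (j:ℝ) + 1/2; linarith)
          (by show ¬ (3:ℝ)/2 ≤ (1:ℝ); norm_num) h
      · rw [upF_inr h1, upF_inr h2] at h
        rcases Nat.lt_trichotomy j j' with hlt | heq | hgt
        · exfalso
          have hc : (j:ℝ) + 1 ≤ (j':ℝ) := by exact_mod_cast hlt
          exact set_ne (A := {p : Pt | p 1 ≤ (j':ℝ) + 1/2}) (gp 0 j')
            (by show (j':ℝ) ≤ (j':ℝ) + 1/2; linarith)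
            (by show ¬ (j':ℝ) ≤ (j:ℝ) + 1/2; push_neg; linarith) h.symm
        · rw [heq]
        · exfalso
          have hc : (j':ℝ) + 1 ≤ (j:ℝ) := by exact_mod_cast hgt
          exact set_ne (A := {p : Pt | p 1 ≤ (j:ℝ) + 1/2}) (gp 0 j)
            (by show (j:ℝ) ≤ (j:ℝ) + 1/2; linarith)
            (by show ¬ (j:ℝ) ≤ (j':ℝ) + 1/2; push_neg; linarith) h

lemma upD_identifies {m n : ℕ} (hm : 3 ≤ m) (hn : 3 ≤ n) :
    Identifies (upD m n) (gridPts m n) := by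
  constructor
  · intro p hp
    obtain ⟨a, b, ha1, ha2, hb1, hb2, rfl⟩ := mem_grid_iff.1 hp
    by_cases h : 2 ≤ a
    · refine ⟨upF (Sum.inl 1), mem_upD_inl le_rfl (by omega), ?_⟩
      rw [upF_inl_one]
      show (3:ℝ)/2 ≤ (a:ℝ)
      have : (2:ℝ) ≤ (a:ℝ) := by exact_mod_cast h
      linarith
    · refine ⟨upF (Sum.inl (n - 1)), mem_upD_inl (by omega) le_rfl, ?_⟩
      rw [upF_inl (by omega)]
      show (a:ℝ) ≤ (↑(n - 1):ℝ) + 1/2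
      have h1 : (a:ℝ) ≤ 1 := by exact_mod_cast (by omega : a ≤ 1)
      have h2 : (1:ℝ) ≤ (↑(n - 1):ℝ) := by exact_mod_cast (by omega : 1 ≤ n - 1)
      linarith
  · intro p hp q hq hpq
    obtain ⟨a, b, ha1, ha2, hb1, hb2, rfl⟩ := mem_grid_iff.1 hp
    obtain ⟨a', b', ha1', ha2', hb1', hb2', rfl⟩ := mem_grid_iff.1 hq
    have sepx : ∀ x y x' y' : ℕ, x < x' → x' ≤ n → 1 ≤ x →
        ∃ D ∈ upD m n, (gp x y ∈ D ∧ gp x' y' ∉ D) ∨ (gp x' y' ∈ D ∧ gp x y ∉ D) := by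
      intro x y x' y' hlt hx' hx
      by_cases h1 : x = 1
      · refine ⟨upF (Sum.inl 1), mem_upD_inl le_rfl (by omega), Or.inr ⟨?_, ?_⟩⟩
        · rw [upF_inl_one]
          show (3:ℝ)/2 ≤ (x':ℝ)
          have : (2:ℝ) ≤ (x':ℝ) := by exact_mod_cast (by omega : 2 ≤ x')
          linarith
        · rw [upF_inl_one]
          show ¬ (3:ℝ)/2 ≤ (x:ℝ)
          have : (x:ℝ) = 1 := by exact_mod_cast h1
          rw [this]; norm_num
      · refine ⟨upF (Sum.inl x), mem_upD_inl (by omega) (by omega), Or.inl ⟨?_, ?_⟩⟩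
        · rw [upF_inl h1]
          show (x:ℝ) ≤ (x:ℝ) + 1/2
          linarith
        · rw [upF_inl h1]
          show ¬ (x':ℝ) ≤ (x:ℝ) + 1/2
          have : (x:ℝ) + 1 ≤ (x':ℝ) := by exact_mod_cast hlt
          push_neg; linarith
    have sepy : ∀ x y x' y' : ℕ, y < y' → y' ≤ m → 1 ≤ y →
        ∃ D ∈ upD m n, (gp x y ∈ D ∧ gp x' y' ∉ D) ∨ (gp x' y' ∈ D ∧ gp x y ∉ D) := by
      intro x y x' y' hlt hy' hy
      by_cases h1 : y = 1
      · refine ⟨upF (Sum.inr 1), mem_upD_inr le_rfl (by omega), Or.inr ⟨?_, ?_⟩⟩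
        · rw [upF_inr_one]
          show (3:ℝ)/2 ≤ (y':ℝ)
          have : (2:ℝ) ≤ (y':ℝ) := by exact_mod_cast (by omega : 2 ≤ y')
          linarith
        · rw [upF_inr_one]
          show ¬ (3:ℝ)/2 ≤ (y:ℝ)
          have : (y:ℝ) = 1 := by exact_mod_cast h1
          rw [this]; norm_num
      · refine ⟨upF (Sum.inr y), mem_upD_inr (by omega) (by omega), Or.inl ⟨?_, ?_⟩⟩
        · rw [upF_inr h1]
          show (y:ℝ) ≤ (y:ℝ) + 1/2
          linarith
        · rw [upF_inr h1]
          show ¬ (y':ℝ) ≤ (y:ℝ) + 1/2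
          have : (y:ℝ) + 1 ≤ (y':ℝ) := by exact_mod_cast hlt
          push_neg; linarith
    rcases Nat.lt_trichotomy a a' with hlt | heq | hgt
    · exact sepx a b a' b' hlt ha2' ha1
    · have hbb : b ≠ b' := by
        intro hb
        exact hpq (by rw [heq, hb])
      rcases Nat.lt_trichotomy b b' with hlt2 | heq2 | hgt2
      · rw [heq]
        exact sepy a' b a' b' hlt2 hb2' hb1
      · exact absurd heq2 hbb
      · rw [heq]
        obtain ⟨D, hD, hs⟩ := sepy a' b' a' b hgt2 hb2 hb1'
        exact ⟨D, hD, hs.symm⟩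
    · obtain ⟨D, hD, hs⟩ := sepx a' b' a b hgt ha2 ha1'
      exact ⟨D, hD, hs.symm⟩

/-- Exactly `m + n - 2` half-planes are needed to identify the grid `{1,…,n} × {1,…,m}`. -/
theorem grid_halfplanes (m n : ℕ) (hm : 3 ≤ m) (hn : 3 ≤ n) :
    (∀ 𝒟 : Finset (Set Pt), (∀ H ∈ 𝒟, IsHalfPlane H) → Identifies 𝒟 (gridPts m n) →
      m + n - 2 ≤ 𝒟.card) ∧
    (∃ 𝒟 : Finset (Set Pt), (∀ H ∈ 𝒟, IsHalfPlane H) ∧ Identifies 𝒟 (gridPts m n) ∧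
      𝒟.card = m + n - 2) := by
  constructor
  · intro 𝒟 hHP hId
    exact lower_bound m n hm hn 𝒟 hHP hId
  · exact ⟨upD m n, upD_isHP, upD_identifies hm hn, upD_card hm hn⟩
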